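/- For every integer n > 3, the toric ideal I_{S_n} is generated by its elements of total degree at most n−1; that is, I_{S_n} equals the ideal generated by the set {f ∈ I_{S_n} : the total degree of f is at most n−1}. -/

import Mathlib

/-- The toric map `φ : ℂ[x_π : π ∈ S_n] → ℂ[t_{ij}]`, `x_π ↦ ∏_i t_{i, π(i)}`. -/
noncomputable def toricMap (n : ℕ) :
    MvPolynomial (Equiv.Perm (Fin n)) ℂ →ₐ[ℂ] MvPolynomial (Fin n × Fin n) ℂ :=
  MvPolynomial.aeval fun π : Equiv.Perm (Fin n) =>
    ∏ i : Fin n, MvPolynomial.X (R := ℂ) (i, π i)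

/-- The toric ideal `I_{S_n}` is the kernel of the toric map. -/
noncomputable def toricIdeal (n : ℕ) : Ideal (MvPolynomial (Equiv.Perm (Fin n)) ℂ) :=
  RingHom.ker (toricMap n).toRingHom

namespace ToricAux

open MvPolynomial Finset

variable {n : ℕ}

/-- Exponent vector of the image of a permutation variable: the permutation matrix. -/
noncomputable def pexp (π : Equiv.Perm (Fin n)) : (Fin n × Fin n) →₀ ℕ :=
  ∑ i : Fin n, Finsupp.single (i, π i) 1

/-- The map on exponents induced by the toric map. -/
noncomputable def expA : (Equiv.Perm (Fin n) →₀ ℕ) →+ ((Fin n × Fin n) →₀ ℕ) :=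
  Finsupp.liftAddHom fun π => (smulAddHom ℕ ((Fin n × Fin n) →₀ ℕ)).flip (pexp π)

/-- Total degree of an exponent vector. -/
noncomputable def deg : (Equiv.Perm (Fin n) →₀ ℕ) →+ ℕ :=
  Finsupp.liftAddHom fun _ => AddMonoidHom.id ℕ

lemma deg_apply (a : Equiv.Perm (Fin n) →₀ ℕ) : deg a = ∑ π ∈ a.support, a π := by
  simp [deg, Finsupp.liftAddHom_apply, Finsupp.sum]

lemma deg_single (π : Equiv.Perm (Fin n)) (k : ℕ) : deg (Finsupp.single π k) = k := by
  simp [deg, Finsupp.liftAddHom_apply_single]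

lemma expA_single (π : Equiv.Perm (Fin n)) (k : ℕ) :
    expA (Finsupp.single π k) = k • pexp π := by
  simp [expA, Finsupp.liftAddHom_apply_single]

lemma pexp_apply (π : Equiv.Perm (Fin n)) (i j : Fin n) :
    pexp π (i, j) = if π i = j then 1 else 0 := by
  classical
  rw [pexp, Finsupp.finset_sum_apply]
  rw [Finset.sum_eq_single i]
  · simp [Finsupp.single_apply, Prod.ext_iff]
  · intro r _ hr
    simp [Finsupp.single_apply, Prod.ext_iff, hr]
  · simp

lemma expA_apply (a : Equiv.Perm (Fin n) →₀ ℕ) (e : Fin n × Fin n) :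
    expA a e = ∑ π ∈ a.support, a π * pexp π e := by
  classical
  rw [expA, Finsupp.liftAddHom_apply, Finsupp.sum_apply, Finsupp.sum]
  simp

lemma rowSum (a : Equiv.Perm (Fin n) →₀ ℕ) (i : Fin n) :
    ∑ j : Fin n, expA a (i, j) = deg a := by
  classical
  simp only [expA_apply, deg_apply]
  rw [Finset.sum_comm]
  refine Finset.sum_congr rfl fun π _ => ?_
  rw [← Finset.mul_sum]
  simp [pexp_apply]

lemma colSum (a : Equiv.Perm (Fin n) →₀ ℕ) (j : Fin n) :
    ∑ i : Fin n, expA a (i, j) = deg a := by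
  classical
  simp only [expA_apply, deg_apply]
  rw [Finset.sum_comm]
  refine Finset.sum_congr rfl fun π _ => ?_
  rw [← Finset.mul_sum]
  have : ∀ i : Fin n, pexp π (i, j) = if i = π.symm j then 1 else 0 := by
    intro i
    rw [pexp_apply]
    congr 1
    simp [Equiv.apply_eq_iff_eq_symm_apply]
  simp only [this]
  simp

lemma deg_eq_of_expA (hn : 0 < n) {a b : Equiv.Perm (Fin n) →₀ ℕ}
    (h : expA a = expA b) : deg a = deg b := by
  have i0 : Fin n := ⟨0, hn⟩
  rw [← rowSum a i0, ← rowSum b i0, h]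

lemma exists_of_pos {a : Equiv.Perm (Fin n) →₀ ℕ} {i j : Fin n}
    (h : 0 < expA a (i, j)) : ∃ π ∈ a.support, π i = j := by
  classical
  by_contra hc
  push_neg at hc
  rw [expA_apply] at h
  have : ∀ π ∈ a.support, a π * pexp π (i, j) = 0 := by
    intro π hπ
    rw [pexp_apply, if_neg (hc π hπ)]
    ring
  rw [Finset.sum_congr rfl this] at h
  simp at h

lemma pos_of_mem {a : Equiv.Perm (Fin n) →₀ ℕ} {π : Equiv.Perm (Fin n)}
    (hπ : π ∈ a.support) (i : Fin n) : 0 < expA a (i, π i) := by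
  classical
  rw [expA_apply]
  have h1 : a π * pexp π (i, π i) = a π := by simp [pexp_apply]
  calc 0 < a π := Nat.pos_of_ne_zero (Finsupp.mem_support_iff.mp hπ)
    _ = a π * pexp π (i, π i) := h1.symm
    _ ≤ ∑ ρ ∈ a.support, a ρ * pexp ρ (i, π i) :=
        Finset.single_le_sum (f := fun ρ => a ρ * pexp ρ (i, π i))
          (fun ρ _ => Nat.zero_le _) hπ


lemma prod_X_eq_monomial {ι : Type*} (s : Finset ι) (f : ι → Fin n × Fin n) :
    (∏ i ∈ s, (X (f i) : MvPolynomial (Fin n × Fin n) ℂ)) =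
      monomial (∑ i ∈ s, Finsupp.single (f i) 1) 1 := by
  classical
  induction s using Finset.induction_on with
  | empty => simp
  | insert _ _ h ih =>
    rw [Finset.prod_insert h, Finset.sum_insert h, ih, X, monomial_mul, one_mul]

lemma prod_monomial {ι : Type*} (s : Finset ι) (u : ι → ((Fin n × Fin n) →₀ ℕ)) :
    (∏ i ∈ s, (monomial (u i) 1 : MvPolynomial (Fin n × Fin n) ℂ)) =
      monomial (∑ i ∈ s, u i) 1 := by
  classical
  induction s using Finset.induction_on with
  | empty => simp
  | insert _ _ h ih =>
    rw [Finset.prod_insert h, Finset.sum_insert h, ih, monomial_mul, one_mul]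

lemma expA_eq_sum (a : Equiv.Perm (Fin n) →₀ ℕ) :
    expA a = ∑ π ∈ a.support, a π • pexp π := by
  rw [expA, Finsupp.liftAddHom_apply]
  rfl

lemma phi_monomial (a : Equiv.Perm (Fin n) →₀ ℕ) (c : ℂ) :
    toricMap n (monomial a c) = monomial (expA a) c := by
  classical
  rw [toricMap, aeval_monomial]
  have h1 : ∀ π : Equiv.Perm (Fin n),
      (∏ i : Fin n, (X (i, π i) : MvPolynomial (Fin n × Fin n) ℂ)) =
        monomial (pexp π) 1 := by
    intro π
    rw [prod_X_eq_monomial]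
    rfl
  have h2 : (a.prod fun π k =>
      (∏ i : Fin n, (X (i, π i) : MvPolynomial (Fin n × Fin n) ℂ)) ^ k) =
      monomial (expA a) 1 := by
    rw [Finsupp.prod]
    have : ∀ π ∈ a.support,
        (∏ i : Fin n, (X (i, π i) : MvPolynomial (Fin n × Fin n) ℂ)) ^ a π =
          monomial (a π • pexp π) 1 := by
      intro π _
      rw [h1, monomial_pow, one_pow]
    rw [Finset.prod_congr rfl this, prod_monomial, ← expA_eq_sum]
  rw [h2, algebraMap_eq, C_mul_monomial, mul_one]

lemma coeff_phi (f : MvPolynomial (Equiv.Perm (Fin n)) ℂ) (m : (Fin n × Fin n) →₀ ℕ) :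
    coeff m (toricMap n f) = ∑ a ∈ f.support, if expA a = m then coeff a f else 0 := by
  classical
  conv_lhs => rw [← support_sum_monomial_coeff f]
  rw [map_sum, coeff_sum]
  refine Finset.sum_congr rfl fun a _ => ?_
  rw [phi_monomial]
  exact coeff_monomial m (expA a) (coeff a f)

lemma deg_eq_sum_id (a : Equiv.Perm (Fin n) →₀ ℕ) : (a.sum fun _ e => e) = deg a := by
  rw [deg, Finsupp.liftAddHom_apply]
  rfl

/-- The set of low-degree elements of the toric ideal. -/
def lowS (n : ℕ) : Set (MvPolynomial (Equiv.Perm (Fin n)) ℂ) :=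
  {f | f ∈ toricIdeal n ∧ f.totalDegree ≤ n - 1}

lemma mem_lowS (hn : 0 < n) {a b : Equiv.Perm (Fin n) →₀ ℕ}
    (h : expA a = expA b) (hdeg : deg a ≤ n - 1) :
    (monomial a 1 - monomial b 1 : MvPolynomial (Equiv.Perm (Fin n)) ℂ) ∈ lowS n := by
  constructor
  · have : toricMap n (monomial a 1 - monomial b 1) = 0 := by
      rw [map_sub, phi_monomial, phi_monomial, h, sub_self]
    simpa [toricIdeal, RingHom.mem_ker] using this
  · refine (totalDegree_sub _ _).trans ?_
    have ha : (monomial a (1:ℂ)).totalDegree = deg a := by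
      rw [totalDegree_monomial _ (one_ne_zero), deg_eq_sum_id]
    have hb : (monomial b (1:ℂ)).totalDegree = deg b := by
      rw [totalDegree_monomial _ (one_ne_zero), deg_eq_sum_id]
    rw [ha, hb, max_le_iff]
    exact ⟨hdeg, (deg_eq_of_expA hn h) ▸ hdeg⟩

lemma pexp_rowSum (π : Equiv.Perm (Fin n)) (i : Fin n) :
    ∑ j : Fin n, pexp π (i, j) = 1 := by
  have h := rowSum (Finsupp.single π 1) i
  rw [deg_single] at h
  rw [← h]
  refine Finset.sum_congr rfl fun j _ => ?_
  rw [expA_single, one_smul]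

lemma pexp_colSum (π : Equiv.Perm (Fin n)) (j : Fin n) :
    ∑ i : Fin n, pexp π (i, j) = 1 := by
  have h := colSum (Finsupp.single π 1) j
  rw [deg_single] at h
  rw [← h]
  refine Finset.sum_congr rfl fun i _ => ?_
  rw [expA_single, one_smul]

lemma birkhoff : ∀ (k : ℕ) (M : (Fin n × Fin n) →₀ ℕ),
    (∀ i, ∑ j : Fin n, M (i, j) = k) → (∀ j, ∑ i : Fin n, M (i, j) = k) →
    ∃ c : Equiv.Perm (Fin n) →₀ ℕ, deg c = k ∧ expA c = M := by
  intro k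
  induction k with
  | zero =>
    intro M hr _
    refine ⟨0, by simp, ?_⟩
    rw [map_zero]
    ext e
    obtain ⟨i, j⟩ := e
    have h1 : M (i, j) ≤ ∑ j' : Fin n, M (i, j') :=
      Finset.single_le_sum (f := fun j' => M (i, j')) (fun _ _ => Nat.zero_le _)
        (Finset.mem_univ j)
    rw [hr i] at h1
    simpa using (Nat.le_zero.mp h1).symm
  | succ k IH =>
    intro M hr hc
    classical
    set t : Fin n → Finset (Fin n) := fun i => Finset.univ.filter fun j => M (i, j) ≠ 0 with ht
    have hall : ∀ s : Finset (Fin n), s.card ≤ (s.biUnion t).card := by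
      intro s
      have h1 : ∀ i ∈ s, ∑ j ∈ s.biUnion t, M (i, j) = k + 1 := by
        intro i hi
        rw [← hr i]
        refine Finset.sum_subset (Finset.subset_univ _) fun j _ hj => ?_
        by_contra hne
        exact hj (Finset.mem_biUnion.mpr ⟨i, hi, Finset.mem_filter.mpr
          ⟨Finset.mem_univ j, hne⟩⟩)
      have h2 : s.card * (k + 1) = ∑ i ∈ s, ∑ j ∈ s.biUnion t, M (i, j) := by
        rw [Finset.sum_congr rfl h1, Finset.sum_const, smul_eq_mul]
      have h3 : ∑ i ∈ s, ∑ j ∈ s.biUnion t, M (i, j)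
          ≤ (s.biUnion t).card * (k + 1) := by
        rw [Finset.sum_comm]
        calc ∑ j ∈ s.biUnion t, ∑ i ∈ s, M (i, j)
            ≤ ∑ j ∈ s.biUnion t, ∑ i : Fin n, M (i, j) :=
              Finset.sum_le_sum fun j _ =>
                Finset.sum_le_sum_of_subset (Finset.subset_univ s)
          _ = (s.biUnion t).card * (k + 1) := by
              rw [Finset.sum_congr rfl fun j _ => hc j, Finset.sum_const, smul_eq_mul]
      have := h2 ▸ h3
      exact Nat.le_of_mul_le_mul_right this (Nat.succ_pos k)
    obtain ⟨f, hfinj, hf⟩ := (Finset.all_card_le_biUnion_card_iff_exists_injective t).mp hall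
    have hbij : Function.Bijective f := (Fintype.bijective_iff_injective_and_card f).mpr
      ⟨hfinj, rfl⟩
    set π := Equiv.ofBijective f hbij with hπdef
    have hπap : ∀ i, π i = f i := fun i => rfl
    have hpos : ∀ i, 0 < M (i, π i) := by
      intro i
      have := hf i
      rw [ht] at this
      simp only [Finset.mem_filter] at this
      rw [hπap]
      exact Nat.pos_of_ne_zero this.2
    have hle : ∀ e, pexp π e ≤ M e := by
      intro e
      obtain ⟨i, j⟩ := e
      rw [pexp_apply]
      split_ifs with h
      · rw [← h]; exact hpos i
      · exact Nat.zero_le _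
    set M' := M - pexp π with hM'def
    have hM'e : ∀ e, M' e = M e - pexp π e := fun e => Finsupp.tsub_apply M (pexp π) e
    have hM'c : ∀ e, M' e + pexp π e = M e := by
      intro e
      rw [hM'e e]
      exact Nat.sub_add_cancel (hle e)
    have hrow' : ∀ i, ∑ j : Fin n, M' (i, j) = k := by
      intro i
      have h4 : (∑ j : Fin n, M' (i, j)) + (∑ j : Fin n, pexp π (i, j))
          = ∑ j : Fin n, M (i, j) := by
        rw [← Finset.sum_add_distrib]
        exact Finset.sum_congr rfl fun j _ => hM'c (i, j)
      rw [pexp_rowSum, hr i] at h4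
      omega
    have hcol' : ∀ j, ∑ i : Fin n, M' (i, j) = k := by
      intro j
      have h4 : (∑ i : Fin n, M' (i, j)) + (∑ i : Fin n, pexp π (i, j))
          = ∑ i : Fin n, M (i, j) := by
        rw [← Finset.sum_add_distrib]
        exact Finset.sum_congr rfl fun i _ => hM'c (i, j)
      rw [pexp_colSum, hc j] at h4
      omega
    obtain ⟨c', hd', he'⟩ := IH M' hrow' hcol'
    refine ⟨c' + Finsupp.single π 1, ?_, ?_⟩
    · rw [map_add, hd', deg_single]
    · rw [map_add, he', expA_single, one_smul]
      ext e
      rw [Finsupp.add_apply]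
      exact hM'c e

/-- The span of the low-degree part of the toric ideal. -/
noncomputable def SP (n : ℕ) : Ideal (MvPolynomial (Equiv.Perm (Fin n)) ℂ) :=
  Ideal.span (lowS n)

/-- The basic move: replace a small sub-multiset `s` of `b` by a redecomposition of its
matrix sum that contains the permutation `π`. -/
lemma move (hn : 0 < n) (b s : Equiv.Perm (Fin n) →₀ ℕ) (hsb : s ≤ b)
    (π : Equiv.Perm (Fin n)) (hπ : pexp π ≤ expA s)
    (h1 : 1 ≤ deg s) (h2 : deg s ≤ n - 1) :
    ∃ b' : Equiv.Perm (Fin n) →₀ ℕ, 1 ≤ b' π ∧ expA b' = expA b ∧ deg b' = deg b ∧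
      (monomial b 1 - monomial b' 1 : MvPolynomial (Equiv.Perm (Fin n)) ℂ) ∈ SP n := by
  classical
  set D : (Fin n × Fin n) →₀ ℕ := expA s - pexp π with hD
  have hDe : ∀ e, D e + pexp π e = expA s e := by
    intro e
    rw [hD, Finsupp.tsub_apply]
    exact Nat.sub_add_cancel (hπ e)
  have hrow : ∀ i, ∑ j : Fin n, D (i, j) = deg s - 1 := by
    intro i
    have h4 : (∑ j : Fin n, D (i, j)) + (∑ j : Fin n, pexp π (i, j))
        = ∑ j : Fin n, expA s (i, j) := by
      rw [← Finset.sum_add_distrib]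
      exact Finset.sum_congr rfl fun j _ => hDe (i, j)
    rw [pexp_rowSum, rowSum] at h4
    omega
  have hcol : ∀ j, ∑ i : Fin n, D (i, j) = deg s - 1 := by
    intro j
    have h4 : (∑ i : Fin n, D (i, j)) + (∑ i : Fin n, pexp π (i, j))
        = ∑ i : Fin n, expA s (i, j) := by
      rw [← Finset.sum_add_distrib]
      exact Finset.sum_congr rfl fun i _ => hDe (i, j)
    rw [pexp_colSum, colSum] at h4
    omega
  obtain ⟨c, hcdeg, hcexp⟩ := birkhoff (deg s - 1) D hrow hcol
  set t : Equiv.Perm (Fin n) →₀ ℕ := Finsupp.single π 1 + c with htdef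
  have hexpt : expA t = expA s := by
    rw [htdef, map_add, expA_single, one_smul, hcexp]
    ext e
    rw [Finsupp.add_apply]
    rw [add_comm]
    exact hDe e
  have hdegt : deg t = deg s := by
    rw [htdef, map_add, deg_single, hcdeg]
    omega
  refine ⟨(b - s) + t, ?_, ?_, ?_, ?_⟩
  · rw [Finsupp.add_apply, htdef, Finsupp.add_apply, Finsupp.single_apply, if_pos rfl]
    omega
  · rw [map_add, hexpt, ← map_add, tsub_add_cancel_of_le hsb]
  · rw [map_add, hdegt, ← map_add, tsub_add_cancel_of_le hsb]
  · have hbin : (monomial s 1 - monomial t 1 : MvPolynomial (Equiv.Perm (Fin n)) ℂ)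
        ∈ lowS n := mem_lowS hn hexpt.symm h2
    have hfac : (monomial b 1 - monomial ((b - s) + t) 1 :
        MvPolynomial (Equiv.Perm (Fin n)) ℂ)
        = monomial (b - s) 1 * (monomial s 1 - monomial t 1) := by
      rw [mul_sub, monomial_mul, monomial_mul, one_mul, tsub_add_cancel_of_le hsb]
    rw [hfac]
    exact Ideal.mul_mem_left _ _ (Ideal.subset_span hbin)

/-- Indicator multiset of a finite set of permutations. -/
noncomputable def indic (F : Finset (Equiv.Perm (Fin n))) : Equiv.Perm (Fin n) →₀ ℕ :=
  ∑ ρ ∈ F, Finsupp.single ρ 1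

lemma indic_apply (F : Finset (Equiv.Perm (Fin n))) (x : Equiv.Perm (Fin n)) :
    indic F x = if x ∈ F then 1 else 0 := by
  classical
  rw [indic, Finsupp.finset_sum_apply]
  rw [Finset.sum_congr rfl fun ρ _ => Finsupp.single_apply (a := ρ) (b := (1:ℕ)) (a' := x)]
  exact Finset.sum_ite_eq' F x fun _ => 1

lemma deg_indic (F : Finset (Equiv.Perm (Fin n))) : deg (indic F) = F.card := by
  rw [indic, map_sum]
  rw [Finset.sum_congr rfl fun ρ _ => deg_single ρ 1]
  simp

lemma expA_indic (F : Finset (Equiv.Perm (Fin n))) (e : Fin n × Fin n) :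
    expA (indic F) e = ∑ ρ ∈ F, pexp ρ e := by
  rw [indic, map_sum, Finsupp.finset_sum_apply]
  refine Finset.sum_congr rfl fun ρ _ => ?_
  rw [expA_single, one_smul]

lemma indic_le {F : Finset (Equiv.Perm (Fin n))} {b : Equiv.Perm (Fin n) →₀ ℕ}
    (h : ∀ ρ ∈ F, ρ ∈ b.support) : indic F ≤ b := by
  rw [Finsupp.le_def]
  intro x
  rw [indic_apply]
  split_ifs with hx
  · exact Nat.one_le_iff_ne_zero.mpr (Finsupp.mem_support_iff.mp (h x hx))
  · exact Nat.zero_le _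

lemma expA_indic_pos {F : Finset (Equiv.Perm (Fin n))} {i j : Fin n}
    {ρ : Equiv.Perm (Fin n)} (hρ : ρ ∈ F) (hρij : ρ i = j) :
    1 ≤ expA (indic F) (i, j) := by
  rw [expA_indic]
  calc (1:ℕ) = pexp ρ (i, j) := by rw [pexp_apply, if_pos hρij]
    _ ≤ ∑ ρ' ∈ F, pexp ρ' (i, j) :=
        Finset.single_le_sum (f := fun ρ' => pexp ρ' (i, j)) (fun _ _ => Nat.zero_le _) hρ

/-- Number of positions where two permutations agree. -/
def agr (σ τ : Equiv.Perm (Fin n)) : ℕ :=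
  (Finset.univ.filter fun i => τ i = σ i).card

/-- Cover move: if some element of `b` agrees with `σ` in at least two positions and the
matrix of `b` covers the graph of `σ`, then one move of size at most `n - 1` inserts `σ`. -/
lemma cover (hn : 3 < n) (b : Equiv.Perm (Fin n) →₀ ℕ) (σ τ : Equiv.Perm (Fin n))
    (hτ : τ ∈ b.support) (hagree : 2 ≤ agr σ τ)
    (hpos : ∀ i, 0 < expA b (i, σ i)) :
    ∃ b' : Equiv.Perm (Fin n) →₀ ℕ, 1 ≤ b' σ ∧ expA b' = expA b ∧ deg b' = deg b ∧
      (monomial b 1 - monomial b' 1 : MvPolynomial (Equiv.Perm (Fin n)) ℂ) ∈ SP n := by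
  classical
  have hex : ∀ i : Fin n, ∃ ρ, ρ ∈ b.support ∧ ρ i = σ i := by
    intro i
    obtain ⟨ρ, hρ1, hρ2⟩ := exists_of_pos (hpos i)
    exact ⟨ρ, hρ1, hρ2⟩
  choose g hg1 hg2 using hex
  set Dis : Finset (Fin n) := Finset.univ.filter fun i => ¬ (τ i = σ i) with hDis
  set F : Finset (Equiv.Perm (Fin n)) := insert τ (Dis.image g) with hF
  have hFsupp : ∀ ρ ∈ F, ρ ∈ b.support := by
    intro ρ hρ
    rw [hF, Finset.mem_insert] at hρ
    rcases hρ with h | h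
    · rwa [h]
    · obtain ⟨i, _, hi2⟩ := Finset.mem_image.mp h
      rw [← hi2]
      exact hg1 i
  have hcard : F.card ≤ n - 1 := by
    have h1 : F.card ≤ 1 + Dis.card := by
      rw [hF]
      refine (Finset.card_insert_le _ _).trans ?_
      have := Finset.card_image_le (s := Dis) (f := g)
      omega
    have h3 := Finset.card_filter_add_card_filter_not
      (s := (Finset.univ : Finset (Fin n))) (p := fun i => τ i = σ i)
    have h4 : (Finset.univ : Finset (Fin n)).card = n := by simp
    have h2 : Dis.card + agr σ τ = n := by
      rw [hDis, agr]
      omega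
    omega
  have hπle : pexp σ ≤ expA (indic F) := by
    rw [Finsupp.le_def]
    intro e
    obtain ⟨i, j⟩ := e
    rw [pexp_apply]
    split_ifs with h
    · subst h
      by_cases hi : τ i = σ i
      · exact expA_indic_pos (Finset.mem_insert_self τ _) hi
      · refine expA_indic_pos (F := F) (ρ := g i) ?_ (hg2 i)
        rw [hF]
        refine Finset.mem_insert_of_mem ?_
        exact Finset.mem_image_of_mem g (Finset.mem_filter.mpr ⟨Finset.mem_univ i, hi⟩)
    · exact Nat.zero_le _
  have hdegF : deg (indic F) = F.card := deg_indic F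
  refine move (by omega) b (indic F) (indic_le hFsupp) σ hπle ?_ ?_
  · rw [hdegF]
    refine Nat.one_le_iff_ne_zero.mpr ?_
    simp [hF]
  · rw [hdegF]; exact hcard

lemma two_le_agr {σ ρ : Equiv.Perm (Fin n)} {i j : Fin n} (hij : i ≠ j)
    (h1 : ρ i = σ i) (h2 : ρ j = σ j) : 2 ≤ agr σ ρ := by
  classical
  have hsub : ({i, j} : Finset (Fin n)) ⊆ Finset.univ.filter fun x => ρ x = σ x := by
    intro x hx
    rcases Finset.mem_insert.mp hx with h | h
    · subst h; exact Finset.mem_filter.mpr ⟨Finset.mem_univ _, h1⟩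
    · rw [Finset.mem_singleton] at h
      subst h; exact Finset.mem_filter.mpr ⟨Finset.mem_univ _, h2⟩
  have hc : ({i, j} : Finset (Fin n)).card = 2 := Finset.card_pair hij
  rw [agr, ← hc]
  exact Finset.card_le_card hsub

/-- The key move of size 3: if all elements of `b` agree with `σ` at most once and the
matrix of `b` has full support, a single move creates an element agreeing twice with `σ`. -/
lemma move3 (hn : 3 < n) (b : Equiv.Perm (Fin n) →₀ ℕ) (σ : Equiv.Perm (Fin n))
    (hb : ∀ τ ∈ b.support, agr σ τ ≤ 1)
    (hpos : ∀ i j : Fin n, 0 < expA b (i, j)) :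
    ∃ (b' : Equiv.Perm (Fin n) →₀ ℕ) (τ' : Equiv.Perm (Fin n)),
      τ' ∈ b'.support ∧ 2 ≤ agr σ τ' ∧ expA b' = expA b ∧ deg b' = deg b ∧
      (monomial b 1 - monomial b' 1 : MvPolynomial (Equiv.Perm (Fin n)) ℂ) ∈ SP n := by
  classical
  set p : Fin n := ⟨0, by omega⟩ with hp
  set q : Fin n := ⟨1, by omega⟩ with hq
  have hpq : p ≠ q := by
    rw [hp, hq]
    intro h
    simpa using congrArg Fin.val h
  obtain ⟨τ₁, hτ₁mem, hτ₁p⟩ := exists_of_pos (hpos p (σ p))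
  obtain ⟨τ₂, hτ₂mem, hτ₂q⟩ := exists_of_pos (hpos q (σ q))
  have hτ₁q : τ₁ q ≠ σ q := by
    intro h
    have := two_le_agr hpq hτ₁p h
    have := hb τ₁ hτ₁mem
    omega
  set r0 : Fin n := τ₁.symm (σ q) with hr0
  have hτ₁r0 : τ₁ r0 = σ q := Equiv.apply_symm_apply τ₁ (σ q)
  have hr0q : r0 ≠ q := by
    intro h
    rw [h] at hτ₁r0
    exact hτ₁q hτ₁r0
  have hr0p : r0 ≠ p := by
    intro h
    rw [h, hτ₁p] at hτ₁r0
    exact hpq (σ.injective hτ₁r0)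
  obtain ⟨τs, hτsmem, hτsr0⟩ := exists_of_pos (hpos r0 (τ₁ q))
  set πs : Equiv.Perm (Fin n) := τ₁ * Equiv.swap q r0 with hπs
  have hπs_q : πs q = σ q := by
    rw [hπs, Equiv.Perm.mul_apply, Equiv.swap_apply_left, hτ₁r0]
  have hπs_r0 : πs r0 = τ₁ q := by
    rw [hπs, Equiv.Perm.mul_apply, Equiv.swap_apply_right]
  have hπs_other : ∀ x : Fin n, x ≠ q → x ≠ r0 → πs x = τ₁ x := by
    intro x h1 h2
    rw [hπs, Equiv.Perm.mul_apply, Equiv.swap_apply_of_ne_of_ne h1 h2]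
  have hπs_p : πs p = σ p := by
    rw [hπs_other p (Ne.symm (Ne.symm hpq)) (Ne.symm hr0p)]
    exact hτ₁p
  set F : Finset (Equiv.Perm (Fin n)) := {τ₁, τ₂, τs} with hF
  have hFsupp : ∀ ρ ∈ F, ρ ∈ b.support := by
    intro ρ hρ
    rw [hF] at hρ
    simp only [Finset.mem_insert, Finset.mem_singleton] at hρ
    rcases hρ with h | h | h <;> subst h <;> assumption
  have hcard : F.card ≤ 3 := by
    rw [hF]
    refine (Finset.card_insert_le _ _).trans ?_
    have := Finset.card_insert_le τ₂ ({τs} : Finset (Equiv.Perm (Fin n)))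
    simp only [Finset.card_singleton] at this
    omega
  have hπle : pexp πs ≤ expA (indic F) := by
    rw [Finsupp.le_def]
    intro e
    obtain ⟨i, j⟩ := e
    rw [pexp_apply]
    split_ifs with h
    · subst h
      by_cases hiq : i = q
      · subst hiq
        refine expA_indic_pos (F := F) (ρ := τ₂) ?_ ?_
        · rw [hF]; simp
        · rw [hτ₂q, hπs_q]
      · by_cases hir0 : i = r0
        · subst hir0
          refine expA_indic_pos (F := F) (ρ := τs) ?_ ?_
          · rw [hF]; simp
          · rw [hτsr0, hπs_r0]
        · refine expA_indic_pos (F := F) (ρ := τ₁) ?_ ?_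
          · rw [hF]; simp
          · rw [hπs_other i hiq hir0]
    · exact Nat.zero_le _
  have hdeg1 : 1 ≤ deg (indic F) := by
    rw [deg_indic]
    refine Nat.one_le_iff_ne_zero.mpr ?_
    simp [hF]
  have hdeg2 : deg (indic F) ≤ n - 1 := by
    rw [deg_indic]
    omega
  obtain ⟨b', hb'π, hb'exp, hb'deg, hb'mem⟩ := move (by omega) b (indic F)
    (indic_le hFsupp) πs hπle hdeg1 hdeg2
  refine ⟨b', πs, ?_, ?_, hb'exp, hb'deg, hb'mem⟩
  · rw [Finsupp.mem_support_iff]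
    omega
  · exact two_le_agr hpq hπs_p hπs_q

lemma agr_eq_sum (σ τ : Equiv.Perm (Fin n)) :
    agr σ τ = ∑ i : Fin n, if τ i = σ i then 1 else 0 := by
  classical
  rw [agr, Finset.card_eq_sum_ones, Finset.sum_filter]

lemma pexp_inner (σ τ : Equiv.Perm (Fin n)) :
    ∑ e : Fin n × Fin n, pexp σ e * pexp τ e = agr σ τ := by
  classical
  rw [Fintype.sum_prod_type]
  have h : ∀ i : Fin n, ∑ j : Fin n, pexp σ (i, j) * pexp τ (i, j)
      = if τ i = σ i then 1 else 0 := by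
    intro i
    simp only [pexp_apply, ite_mul, one_mul, zero_mul]
    rw [Finset.sum_ite_eq]
    simp
  rw [Finset.sum_congr rfl fun i _ => h i, agr_eq_sum]

lemma cross_sum (a b : Equiv.Perm (Fin n) →₀ ℕ) :
    ∑ e : Fin n × Fin n, expA a e * expA b e
      = ∑ σ ∈ a.support, ∑ τ ∈ b.support, (a σ * b τ) * agr σ τ := by
  classical
  have h1 : ∀ e : Fin n × Fin n, expA a e * expA b e
      = ∑ σ ∈ a.support, ∑ τ ∈ b.support, (a σ * b τ) * (pexp σ e * pexp τ e) := by
    intro e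
    rw [expA_apply, expA_apply, Finset.sum_mul_sum]
    exact Finset.sum_congr rfl fun σ _ => Finset.sum_congr rfl fun τ _ => by ring
  rw [Finset.sum_congr rfl fun e _ => h1 e]
  rw [Finset.sum_comm]
  refine Finset.sum_congr rfl fun σ _ => ?_
  rw [Finset.sum_comm]
  refine Finset.sum_congr rfl fun τ _ => ?_
  rw [← Finset.mul_sum, pexp_inner]

lemma full_pos (hn : 3 < n) {a b : Equiv.Perm (Fin n) →₀ ℕ}
    (hM : expA a = expA b) (hd : n ≤ deg a)
    (hag : ∀ σ ∈ a.support, ∀ τ ∈ b.support, agr σ τ ≤ 1) :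
    ∀ i j : Fin n, 0 < expA a (i, j) := by
  classical
  have hn0 : 0 < n := by omega
  have hdb : deg b = deg a := (deg_eq_of_expA hn0 hM).symm
  have key0 : ∑ e : Fin n × Fin n, expA a e * expA b e ≤ deg a * deg b := by
    rw [cross_sum]
    calc ∑ σ ∈ a.support, ∑ τ ∈ b.support, (a σ * b τ) * agr σ τ
        ≤ ∑ σ ∈ a.support, ∑ τ ∈ b.support, (a σ * b τ) * 1 :=
          Finset.sum_le_sum fun σ hσ => Finset.sum_le_sum fun τ hτ =>
            Nat.mul_le_mul_left _ (hag σ hσ τ hτ)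
      _ = deg a * deg b := by
          simp only [mul_one]
          rw [← Finset.sum_mul_sum, deg_apply, deg_apply]
  rw [← hM, hdb] at key0
  have key : ∑ i : Fin n, ∑ j : Fin n, expA a (i, j) ^ 2 ≤ deg a * deg a := by
    calc ∑ i : Fin n, ∑ j : Fin n, expA a (i, j) ^ 2
        = ∑ e : Fin n × Fin n, expA a e ^ 2 :=
          (Fintype.sum_prod_type (f := fun e : Fin n × Fin n => expA a e ^ 2)).symm
      _ = ∑ e : Fin n × Fin n, expA a e * expA a e :=
          Finset.sum_congr rfl fun e _ => sq (expA a e)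
      _ ≤ deg a * deg a := key0
  by_contra hcon
  push_neg at hcon
  obtain ⟨i0, j0, h0⟩ := hcon
  have h0' : expA a (i0, j0) = 0 := Nat.le_zero.mp h0
  set R : Fin n → ℕ := fun i => ∑ j : Fin n, expA a (i, j) ^ 2 with hR
  have h4 : deg a * deg a ≤ (n - 1) * R i0 := by
    have herase : ∑ j ∈ Finset.univ.erase j0, expA a (i0, j) = deg a := by
      have h9 := Finset.sum_erase (s := (Finset.univ : Finset (Fin n)))
        (f := fun j => expA a (i0, j)) (a := j0) h0'
      rw [h9, rowSum]
    have hcs := sq_sum_le_card_mul_sum_sq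
      (s := Finset.univ.erase j0) (f := fun j => expA a (i0, j))
    rw [herase] at hcs
    have hcard : (Finset.univ.erase j0).card = n - 1 := by
      rw [Finset.card_erase_of_mem (Finset.mem_univ j0)]
      simp
    rw [hcard] at hcs
    calc deg a * deg a = deg a ^ 2 := (sq (deg a)).symm
      _ ≤ (n - 1) * ∑ j ∈ Finset.univ.erase j0, expA a (i0, j) ^ 2 := hcs
      _ ≤ (n - 1) * R i0 := by
          refine Nat.mul_le_mul_left _ ?_
          exact Finset.sum_le_sum_of_subset (Finset.subset_univ _)
  have h5 : ∀ i : Fin n, deg a * deg a ≤ n * R i := by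
    intro i
    have hcs := sq_sum_le_card_mul_sum_sq
      (s := (Finset.univ : Finset (Fin n))) (f := fun j => expA a (i, j))
    rw [rowSum] at hcs
    have hcard : (Finset.univ : Finset (Fin n)).card = n := by simp
    rw [hcard] at hcs
    calc deg a * deg a = deg a ^ 2 := (sq (deg a)).symm
      _ ≤ n * R i := hcs
  have h6 : (n - 1) * (deg a * deg a) ≤ n * ∑ i ∈ Finset.univ.erase i0, R i := by
    calc (n - 1) * (deg a * deg a)
        = ∑ _i ∈ Finset.univ.erase i0, deg a * deg a := by
          rw [Finset.sum_const, Finset.card_erase_of_mem (Finset.mem_univ i0),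
            smul_eq_mul]
          simp
      _ ≤ ∑ i ∈ Finset.univ.erase i0, n * R i :=
          Finset.sum_le_sum fun i _ => h5 i
      _ = n * ∑ i ∈ Finset.univ.erase i0, R i := (Finset.mul_sum _ _ _).symm
  have h8 : R i0 + ∑ i ∈ Finset.univ.erase i0, R i = ∑ i : Fin n, R i :=
    Finset.add_sum_erase _ _ (Finset.mem_univ i0)
  have h7 : ∑ i : Fin n, R i ≤ deg a * deg a := key
  have hm : 0 < deg a * deg a := by
    have : 0 < deg a := by omega
    exact Nat.mul_pos this this
  obtain ⟨k, hk⟩ : ∃ k, n = k + 1 := ⟨n - 1, by omega⟩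
  subst hk
  rw [Nat.add_sub_cancel] at h4 h6
  set m := deg a * deg a
  set A := R i0
  set B := ∑ i ∈ Finset.univ.erase i0, R i
  have c1 : (k + 1) * m ≤ (k + 1) * (k * A) := Nat.mul_le_mul_left _ h4
  have c2 : k * (k * m) ≤ k * ((k + 1) * B) := Nat.mul_le_mul_left _ h6
  have c3 : (k + 1) * k * (A + B) ≤ (k + 1) * k * m := by
    refine Nat.mul_le_mul_left _ ?_
    omega
  nlinarith [c1, c2, c3, hm]

/-- Main lemma: every binomial relation lies in the span of the low-degree part. -/
lemma bin (hn : 3 < n) : ∀ (d : ℕ) (a b : Equiv.Perm (Fin n) →₀ ℕ), deg a = d →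
    expA a = expA b →
    (monomial a 1 - monomial b 1 : MvPolynomial (Equiv.Perm (Fin n)) ℂ) ∈ SP n := by
  intro d
  induction d using Nat.strong_induction_on with
  | _ d IH =>
  intro a b hda hM
  subst hda
  by_cases hsmall : deg a ≤ n - 1
  · exact Ideal.subset_span (mem_lowS (by omega) hM hsmall)
  have hd : n ≤ deg a := by omega
  have finish_shared : ∀ b' : Equiv.Perm (Fin n) →₀ ℕ, expA a = expA b' →
      (∃ σ, 1 ≤ a σ ∧ 1 ≤ b' σ) →
      (monomial a 1 - monomial b' 1 : MvPolynomial (Equiv.Perm (Fin n)) ℂ) ∈ SP n := by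
    rintro b' hM' ⟨σ, haσ, hb'σ⟩
    have h1 : Finsupp.single σ 1 ≤ a := Finsupp.single_le_iff.mpr haσ
    have h2 : Finsupp.single σ 1 ≤ b' := Finsupp.single_le_iff.mpr hb'σ
    set a' := a - Finsupp.single σ 1 with ha'def
    set c' := b' - Finsupp.single σ 1 with hc'def
    have ha' : Finsupp.single σ 1 + a' = a := by
      rw [ha'def, add_comm]
      exact tsub_add_cancel_of_le h1
    have hc' : Finsupp.single σ 1 + c' = b' := by
      rw [hc'def, add_comm]
      exact tsub_add_cancel_of_le h2
    have hdeg' : deg a' + 1 = deg a := by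
      conv_rhs => rw [← ha']
      rw [map_add, deg_single]
      omega
    have hexp' : expA a' = expA c' := by
      have e1 : pexp σ + expA a' = expA a := by
        conv_rhs => rw [← ha']
        rw [map_add, expA_single, one_smul]
      have e2 : pexp σ + expA c' = expA b' := by
        conv_rhs => rw [← hc']
        rw [map_add, expA_single, one_smul]
      rw [hM'] at e1
      exact add_left_cancel (e1.trans e2.symm)
    have hfac : (monomial a 1 - monomial b' 1 : MvPolynomial (Equiv.Perm (Fin n)) ℂ)
        = monomial (Finsupp.single σ 1) 1 * (monomial a' 1 - monomial c' 1) := by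
      rw [mul_sub, monomial_mul, monomial_mul, one_mul, ha', hc']
    rw [hfac]
    exact Ideal.mul_mem_left _ _ (IH (deg a') (by omega) a' c' rfl hexp')
  by_cases hshare : ∃ σ, 1 ≤ a σ ∧ 1 ≤ b σ
  · exact finish_shared b hM hshare
  by_cases hag : ∃ σ ∈ a.support, ∃ τ ∈ b.support, 2 ≤ agr σ τ
  · obtain ⟨σ, hσ, τ, hτ, h2⟩ := hag
    have hpos : ∀ i, 0 < expA b (i, σ i) := fun i => hM ▸ pos_of_mem hσ i
    obtain ⟨b', hb'σ, hb'exp, hb'deg, hb'mem⟩ := cover hn b σ τ hτ h2 hpos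
    have step1 : (monomial a 1 - monomial b' 1 :
        MvPolynomial (Equiv.Perm (Fin n)) ℂ) ∈ SP n :=
      finish_shared b' (hM.trans hb'exp.symm)
        ⟨σ, Nat.one_le_iff_ne_zero.mpr (Finsupp.mem_support_iff.mp hσ), hb'σ⟩
    have hsplit : (monomial a 1 - monomial b 1 :
        MvPolynomial (Equiv.Perm (Fin n)) ℂ)
        = (monomial a 1 - monomial b' 1) + (-(monomial b 1 - monomial b' 1)) := by
      ring
    rw [hsplit]
    exact add_mem step1 (neg_mem hb'mem)
  · push_neg at hag
    have hag' : ∀ σ ∈ a.support, ∀ τ ∈ b.support, agr σ τ ≤ 1 := fun σ hσ τ hτ =>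
      Nat.lt_succ_iff.mp (hag σ hσ τ hτ)
    have hpos := full_pos hn hM hd hag'
    have hane : a.support.Nonempty := by
      rw [Finsupp.support_nonempty_iff]
      intro h
      rw [h, map_zero] at hd
      omega
    obtain ⟨σ, hσ⟩ := hane
    have hbag : ∀ τ ∈ b.support, agr σ τ ≤ 1 := fun τ hτ => hag' σ hσ τ hτ
    have hposb : ∀ i j : Fin n, 0 < expA b (i, j) := fun i j => hM ▸ hpos i j
    obtain ⟨b', τ', hτ', h2', hb'exp, hb'deg, hb'mem⟩ := move3 hn b σ hbag hposb
    have hposb' : ∀ i, 0 < expA b' (i, σ i) := by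
      intro i
      rw [hb'exp]
      exact hposb i (σ i)
    obtain ⟨b'', hb''σ, hb''exp, hb''deg, hb''mem⟩ := cover hn b' σ τ' hτ' h2' hposb'
    have step1 : (monomial a 1 - monomial b'' 1 :
        MvPolynomial (Equiv.Perm (Fin n)) ℂ) ∈ SP n :=
      finish_shared b'' (hM.trans (hb'exp.symm.trans hb''exp.symm))
        ⟨σ, Nat.one_le_iff_ne_zero.mpr (Finsupp.mem_support_iff.mp hσ), hb''σ⟩
    have hsplit : (monomial a 1 - monomial b 1 :
        MvPolynomial (Equiv.Perm (Fin n)) ℂ)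
        = (monomial a 1 - monomial b'' 1) + (-(monomial b' 1 - monomial b'' 1))
          + (-(monomial b 1 - monomial b' 1)) := by
      ring
    rw [hsplit]
    exact add_mem (add_mem step1 (neg_mem hb''mem)) (neg_mem hb'mem)

lemma SP_le_toricIdeal : SP n ≤ toricIdeal n :=
  Ideal.span_le.mpr fun _ hg => hg.1

lemma toricMap_eq_zero_of_mem {f : MvPolynomial (Equiv.Perm (Fin n)) ℂ}
    (hf : f ∈ toricIdeal n) : toricMap n f = 0 := by
  rw [toricIdeal, RingHom.mem_ker] at hf
  exact hf

/-- The toric ideal is contained in the span of its low-degree part. -/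
lemma ker_le (hn : 3 < n) : toricIdeal n ≤ SP n := by
  suffices H : ∀ (N : ℕ) (f : MvPolynomial (Equiv.Perm (Fin n)) ℂ),
      f ∈ toricIdeal n → f.support.card ≤ N → f ∈ SP n by
    intro f hf
    exact H f.support.card f hf le_rfl
  intro N
  induction N with
  | zero =>
    intro f _ hc
    have : f.support = ∅ := Finset.card_eq_zero.mp (Nat.le_zero.mp hc)
    rw [MvPolynomial.support_eq_empty.mp this]
    exact zero_mem _
  | succ N IHN =>
    intro f hf hc
    classical
    by_cases h0 : f = 0
    · rw [h0]; exact zero_mem _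
    obtain ⟨a₀, ha₀⟩ := Finset.nonempty_iff_ne_empty.mpr
      (fun h => h0 (MvPolynomial.support_eq_empty.mp h))
    set T : Finset (Equiv.Perm (Fin n) →₀ ℕ) :=
      f.support.filter fun x => expA x = expA a₀ with hT
    have ha₀T : a₀ ∈ T := Finset.mem_filter.mpr ⟨ha₀, rfl⟩
    have hsum0 : ∑ x ∈ T, coeff x f = 0 := by
      have h1 : coeff (expA a₀) (toricMap n f) = 0 := by
        rw [toricMap_eq_zero_of_mem hf]
        exact coeff_zero _
      rw [coeff_phi] at h1
      rw [hT, Finset.sum_filter]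
      exact h1
    set h : MvPolynomial (Equiv.Perm (Fin n)) ℂ :=
      ∑ x ∈ T, C (coeff x f) * (monomial x 1 - monomial a₀ 1) with hh
    have hhSP : h ∈ SP n := by
      refine Submodule.sum_mem _ fun x hx => ?_
      refine Ideal.mul_mem_left _ _ ?_
      exact bin hn (deg x) x a₀ rfl (Finset.mem_filter.mp hx).2
    have hh2 : h = ∑ x ∈ T, monomial x (coeff x f) := by
      rw [hh]
      rw [Finset.sum_congr rfl fun x _ => mul_sub (C (coeff x f))
        (monomial x 1) (monomial a₀ 1)]
      rw [Finset.sum_sub_distrib]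
      have e1 : ∀ x ∈ T, C (coeff x f) * monomial x 1 = monomial x (coeff x f) := by
        intro x _
        rw [C_mul_monomial, mul_one]
      have e2 : ∑ x ∈ T, C (coeff x f) * monomial a₀ 1
          = C (∑ x ∈ T, coeff x f) * monomial a₀ 1 := by
        rw [map_sum, Finset.sum_mul]
      rw [Finset.sum_congr rfl e1, e2, hsum0, map_zero, zero_mul, sub_zero]
    have hcoeffh : ∀ x, coeff x h = if x ∈ T then coeff x f else 0 := by
      intro x
      rw [hh2, coeff_sum]
      rw [Finset.sum_congr rfl fun y _ => coeff_monomial x y (coeff y f)]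
      exact Finset.sum_ite_eq' T x fun y => coeff y f
    set f' := f - h with hf'
    have hf'mem : f' ∈ toricIdeal n := sub_mem hf (SP_le_toricIdeal hhSP)
    have hsupp' : f'.support ⊆ f.support.erase a₀ := by
      intro x hx
      rw [MvPolynomial.mem_support_iff] at hx
      rw [hf', coeff_sub, hcoeffh] at hx
      by_cases hxT : x ∈ T
      · rw [if_pos hxT, sub_self] at hx
        exact absurd rfl hx
      · rw [if_neg hxT, sub_zero] at hx
        refine Finset.mem_erase.mpr ⟨?_, MvPolynomial.mem_support_iff.mpr hx⟩
        intro hxa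
        exact hxT (hxa ▸ ha₀T)
    have hcard' : f'.support.card ≤ N := by
      have h1 : (f.support.erase a₀).card = f.support.card - 1 :=
        Finset.card_erase_of_mem ha₀
      have h2 : f'.support.card ≤ (f.support.erase a₀).card :=
        Finset.card_le_card hsupp'
      have h3 : 1 ≤ f.support.card := Finset.card_pos.mpr ⟨a₀, ha₀⟩
      omega
    have : f = f' + h := by rw [hf', sub_add_cancel]
    rw [this]
    exact add_mem (IHN f' hf'mem hcard') hhSP

end ToricAux

open ToricAux in
/-- For `n > 3`, the toric ideal `I_{S_n}` is generated by its elements of total degree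
at most `n - 1`. -/
theorem toricIdeal_generated_in_degree_le_sub_one (n : ℕ) (hn : 3 < n) :
    toricIdeal n =
      Ideal.span {f : MvPolynomial (Equiv.Perm (Fin n)) ℂ |
        f ∈ toricIdeal n ∧ f.totalDegree ≤ n - 1} := by
  refine le_antisymm (ker_le hn) (Ideal.span_le.mpr fun g hg => hg.1)
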